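/- The group presented by ⟨x, y | x⁻¹ y² x = y³, x² = y x y⟩ is the trivial group. -/

import Mathlib

/-- The generator `x` of the free group on two generators. -/
def x : FreeGroup Bool := FreeGroup.of true

/-- The generator `y` of the free group on two generators. -/
def y : FreeGroup Bool := FreeGroup.of false

lemma aux_trivial {G : Type*} [Group G] (X Y : G)
    (h1 : X⁻¹ * (Y * Y) * X = Y * Y * Y) (h2 : X * X = Y * X * Y) : X = 1 ∧ Y = 1 := by
  have ha : X⁻¹ * (Y * X) = X * Y⁻¹ := by
    have hYX : Y * X = X * X * Y⁻¹ := by rw [h2]; group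
    rw [hYX]; group
  have hb : (X * Y⁻¹) * (X * Y⁻¹) = Y * Y * Y := by
    rw [← ha, ← h1]; group
  have hstar : X * Y⁻¹ * X = Y * Y * Y * Y := by
    calc X * Y⁻¹ * X = (X * Y⁻¹) * (X * Y⁻¹) * Y := by group
    _ = Y * Y * Y * Y := by rw [hb]
  have hc : (X * Y⁻¹) * (X * Y⁻¹) * (X * Y⁻¹) = Y * Y * Y := by
    calc (X * Y⁻¹) * (X * Y⁻¹) * (X * Y⁻¹)
        = (X⁻¹ * (Y * X)) * (X⁻¹ * (Y * X)) * (X⁻¹ * (Y * X)) := by rw [ha]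
    _ = X⁻¹ * (Y * Y * Y) * X := by group
    _ = X⁻¹ * (X⁻¹ * (Y * Y) * X) * X := by rw [h1]
    _ = (X * X)⁻¹ * (Y * Y) * (X * X) := by group
    _ = (Y * X * Y)⁻¹ * (Y * Y) * (Y * X * Y) := by rw [h2]
    _ = Y⁻¹ * (X⁻¹ * (Y * Y) * X) * Y := by group
    _ = Y⁻¹ * (Y * Y * Y) * Y := by rw [h1]
    _ = Y * Y * Y := by group
  have hd : (Y * Y * Y) * (X * Y⁻¹) = (Y * Y * Y) * 1 := by
    calc (Y * Y * Y) * (X * Y⁻¹) = (Y * Y * Y * Y) * (Y⁻¹ * (X * Y⁻¹)) := by group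
    _ = (X * Y⁻¹ * X) * (Y⁻¹ * (X * Y⁻¹)) := by rw [hstar]
    _ = (X * Y⁻¹) * (X * Y⁻¹) * (X * Y⁻¹) := by group
    _ = Y * Y * Y := hc
    _ = (Y * Y * Y) * 1 := (mul_one _).symm
  have hXY : X = Y := by
    have := mul_left_cancel hd
    rwa [mul_inv_eq_one] at this
  have hY : Y = 1 := by
    rw [hXY] at h1
    have e : Y * Y = Y * Y * Y := by rw [← h1]; group
    have e2 : Y * Y * 1 = Y * Y * Y := by rw [mul_one]; exact e
    exact (mul_left_cancel e2).symm
  exact ⟨hXY.trans hY, hY⟩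

/-- The group ⟨x, y | x⁻¹ y² x = y³, x² = y x y⟩ is trivial. -/
theorem presentedGroup_trivial_6 :
    Subsingleton (PresentedGroup ({x⁻¹ * y ^ 2 * x * (y ^ 3)⁻¹, x ^ 2 * (y * x * y)⁻¹} :
      Set (FreeGroup Bool))) := by
  set rels : Set (FreeGroup Bool) :=
    {x⁻¹ * y ^ 2 * x * (y ^ 3)⁻¹, x ^ 2 * (y * x * y)⁻¹} with hrels
  set X : PresentedGroup rels := PresentedGroup.mk rels x with hX
  set Y : PresentedGroup rels := PresentedGroup.mk rels y with hY
  have rel_one : ∀ r ∈ rels, PresentedGroup.mk rels r = 1 := by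
    intro r hr
    exact (QuotientGroup.eq_one_iff r).mpr (Subgroup.subset_normalClosure hr)
  have h1 : X⁻¹ * (Y * Y) * X = Y * Y * Y := by
    have := rel_one _ (Set.mem_insert _ _)
    simp only [map_mul, map_inv, map_pow] at this
    rw [mul_inv_eq_one] at this
    rw [← hX, ← hY, pow_succ Y 2, pow_two] at this
    exact this
  have h2 : X * X = Y * X * Y := by
    have := rel_one _ (Set.mem_insert_of_mem _ rfl)
    simp only [map_mul, map_inv, map_pow] at this
    rw [mul_inv_eq_one] at this
    rw [← hX, ← hY, pow_two] at this
    exact this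
  obtain ⟨hX1, hY1⟩ := aux_trivial X Y h1 h2
  have all_one : ∀ g : PresentedGroup rels, g = 1 := by
    intro g
    have : g ∈ (⊥ : Subgroup (PresentedGroup rels)) := by
      refine PresentedGroup.generated_by rels ⊥ (fun j => ?_) g
      cases j
      · exact (Subgroup.mem_bot).mpr hY1
      · exact (Subgroup.mem_bot).mpr hX1
    simpa using this
  exact ⟨fun a b => (all_one a).trans (all_one b).symm⟩
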